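/- A ring R is abelian if and only if the formal power series ring R[[x]] is abelian. -/

import Mathlib

section Defs

variable (S : Type*) [Ring S]

/-- `S` is right idempotent reflexive: `aSe = 0` implies `eSa = 0` for idempotent `e`. -/
def RightIdemReflexive : Prop :=
  ∀ a e : S, e * e = e → (∀ r : S, a * r * e = 0) → ∀ r : S, e * r * a = 0

/-- `S` is left idempotent reflexive: `eSa = 0` implies `aSe = 0` for idempotent `e`. -/
def LeftIdemReflexive : Prop :=
  ∀ a e : S, e * e = e → (∀ r : S, e * r * a = 0) → ∀ r : S, a * r * e = 0

/-- `S` is idempotent reflexive if it is both left and right idempotent reflexive. -/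
def IdemReflexive : Prop := LeftIdemReflexive S ∧ RightIdemReflexive S

/-- `S` is abelian if every idempotent is central. -/
def IsAbelianRing : Prop := ∀ e : S, e * e = e → ∀ r : S, e * r = r * e

end Defs

theorem stmt17 {R : Type*} [Ring R] :
    IsAbelianRing R ↔ IsAbelianRing (PowerSeries R) := by
  constructor
  · intro h E hE
    set e0 : R := PowerSeries.coeff 0 E with he0def
    have he0 : e0 * e0 = e0 := by
      have := congrArg (PowerSeries.coeff 0) hE
      simpa [PowerSeries.coeff_mul, he0def,
        PowerSeries.coeff_zero_eq_constantCoeff_apply] using this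
    -- all higher coefficients vanish
    have hc : ∀ n, 1 ≤ n → PowerSeries.coeff n E = 0 := by
      intro n
      induction n using Nat.strong_induction_on with
      | _ n ih =>
        intro hn
        have hsum : ∑ i ∈ Finset.range (n + 1),
            PowerSeries.coeff i E * PowerSeries.coeff (n - i) E
            = PowerSeries.coeff n E := by
          have := congrArg (PowerSeries.coeff n) hE
          rwa [PowerSeries.coeff_mul,
            Finset.Nat.sum_antidiagonal_eq_sum_range_succ_mk] at this
        have hpeel : e0 * PowerSeries.coeff n E + PowerSeries.coeff n E * e0
            = PowerSeries.coeff n E := by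
          rw [Finset.sum_range_succ] at hsum
          have hfirst : ∑ i ∈ Finset.range n,
              PowerSeries.coeff i E * PowerSeries.coeff (n - i) E
              = e0 * PowerSeries.coeff n E := by
            rw [Finset.sum_eq_single_of_mem 0 (Finset.mem_range.mpr (by omega))]
            · simp [he0def]
            · intro i _ hi0
              have hi1 : 1 ≤ i := Nat.one_le_iff_ne_zero.mpr hi0
              rw [ih i (Finset.mem_range.mp ‹i ∈ Finset.range n›) hi1, zero_mul]
          rw [hfirst] at hsum
          simpa [he0def] using hsum
        set a := PowerSeries.coeff n E with hadef
        have hcomm : ∀ r : R, e0 * r = r * e0 := h e0 he0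
        have he0a : e0 * a = 0 := by
          have h1 := congrArg (fun x => e0 * x) hpeel
          simp only [mul_add, ← mul_assoc, he0] at h1
          have h3 : e0 * a * e0 = e0 * a := by
            rw [mul_assoc, ← hcomm a, ← mul_assoc, he0]
          rw [h3] at h1
          have h4 : e0 * a + e0 * a = e0 * a + 0 := by rw [h1, add_zero]
          exact add_left_cancel h4
        have : a = 0 := by
          rw [← hpeel, ← hcomm a, he0a, add_zero]
        exact this
    have hEC : E = PowerSeries.C e0 := by
      ext n
      cases n with
      | zero => simp [he0def]
      | succ m =>
        rw [hc (m + 1) (by omega), PowerSeries.coeff_C]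
        simp
    intro f
    rw [hEC]
    ext n
    rw [PowerSeries.coeff_C_mul, PowerSeries.coeff_mul_C, h e0 he0]
  · intro h e he r
    have hCe : (PowerSeries.C e) * (PowerSeries.C e) = PowerSeries.C e := by
      rw [← map_mul, he]
    have := h (PowerSeries.C e) hCe (PowerSeries.C r)
    have h2 := congrArg (PowerSeries.constantCoeff) this
    simpa using h2
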